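/- arXiv:2011.12382 — 2 statements merged into one kernel-verified Lean document; each statement's English description precedes it below -/
import Mathlib

section
/- Error recursion (Proposition): Define E_j := || sup_{z∈L} |Ĉ_j(z,·) − C*_j(z,·)| ||_{L²(μ_j ⊗ P_M)} for j = 0,...,J−1, with E_J = 0. Assume the empirical projection satisfies, for each z, ||Ĉ_j(z,·) − C̃_j(z,·)||_{L²(μ_j⊗P_M)} ≤ ε_{j,M} + √2 · inf_{w∈Ψ_j} ||C̃_j(z,·) − w||_{L²(μ_j⊗P_M)}, and the one-step propagation inequality of the previous lemma holds. Then E_j ≤ |L|·( ε_{j,M} + √2 · sup_{z∈L} inf_{w∈Ψ_j} ||C̃_j(z,·) − w||_{L²(μ_j⊗P_M)} ) + |L|·E_{j+1}. -/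
open MeasureTheory

/-- The `L²(ν)`-norm of a real function. -/
noncomputable def l2norm {α : Type*} [MeasurableSpace α] (ν : Measure α) (f : α → ℝ) : ℝ :=
  (eLpNorm f 2 ν).toReal

/-- `E_j := ‖ sup_{z∈L} |Ĉ_j(z,·) − C*_j(z,·)| ‖_{L²(μ_j ⊗ P_M)}` for `j < J`, and `E_J = 0`
by definition. -/
noncomputable def errSeq {α L : Type*} [MeasurableSpace α] [Fintype L]
    (J : ℕ) (ν : ℕ → Measure α) (Chat Cstar : ℕ → L → α → ℝ) (j : ℕ) : ℝ :=
  if j < J then l2norm (ν j) (fun x => ⨆ z : L, |Chat j z x - Cstar j z x|) else 0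

set_option maxHeartbeats 1000000 in
/-- **Error recursion** (Proposition): assume the empirical projection bound
`‖Ĉ_j(z,·) − C̃_j(z,·)‖ ≤ ε_{j,M} + √2·inf_{w∈Ψ_j} ‖C̃_j(z,·) − w‖` for each `z`, and the
one-step propagation inequality `‖sup_z |C̃_j − C*_j|‖ ≤ E_{j+1}`.  Then
`E_j ≤ |L|·(ε_{j,M} + √2·sup_z inf_{w∈Ψ_j} ‖C̃_j(z,·) − w‖) + |L|·E_{j+1}` for `j < J`
(with `E_J = 0`). -/
theorem error_recursion
    {α L : Type*} [MeasurableSpace α] [Fintype L] [Nonempty L]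
    (J : ℕ) (ν : ℕ → Measure α)
    (Chat Ctil Cstar : ℕ → L → α → ℝ)
    (Ψ : ℕ → Set (α → ℝ)) (hΨ : ∀ j, (Ψ j).Nonempty)
    (ε : ℕ → ℝ)
    (hmChat : ∀ j z, Measurable (Chat j z))
    (hmCtil : ∀ j z, Measurable (Ctil j z))
    (hmCstar : ∀ j z, Measurable (Cstar j z))
    (hL2Chat : ∀ j z, MemLp (Chat j z) 2 (ν j))
    (hL2Ctil : ∀ j z, MemLp (Ctil j z) 2 (ν j))
    (hL2Cstar : ∀ j z, MemLp (Cstar j z) 2 (ν j))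
    (hproj : ∀ j, j < J → ∀ z : L,
      l2norm (ν j) (fun x => Chat j z x - Ctil j z x) ≤
        ε j + Real.sqrt 2 *
          sInf ((fun w => l2norm (ν j) (fun x => Ctil j z x - w x)) '' Ψ j))
    (hprop : ∀ j, j + 1 ≤ J →
      l2norm (ν j) (fun x => ⨆ z : L, |Ctil j z x - Cstar j z x|) ≤
        errSeq J ν Chat Cstar (j + 1)) :
    ∀ j, j < J →
      errSeq J ν Chat Cstar j ≤
        (Fintype.card L : ℝ) * (ε j + Real.sqrt 2 *
            ⨆ z : L, sInf ((fun w => l2norm (ν j) (fun x => Ctil j z x - w x)) '' Ψ j)) +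
          (Fintype.card L : ℝ) * errSeq J ν Chat Cstar (j + 1) := by
  intro j hj
  classical
  set S : ℝ := ⨆ z : L, sInf ((fun w => l2norm (ν j) (fun x => Ctil j z x - w x)) '' Ψ j)
    with hSdef
  have habs_mem : ∀ (F G : L → α → ℝ), (∀ z, MemLp (F z) 2 (ν j)) →
      (∀ z, MemLp (G z) 2 (ν j)) → ∀ z : L,
      MemLp (fun x => |F z x - G z x|) 2 (ν j) := by
    intro F G hF hG z
    simpa [Real.norm_eq_abs] using ((hF z).sub (hG z)).norm
  have hsup_le_sum : ∀ (f : L → α → ℝ) (x : α),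
      (⨆ z : L, |f z x|) ≤ ∑ z : L, |f z x| := fun f x =>
    ciSup_le fun z => Finset.single_le_sum (f := fun z => |f z x|) (fun z _ => abs_nonneg _) (Finset.mem_univ z)
  have hsup_meas : ∀ (F G : L → α → ℝ), (∀ z, Measurable (F z)) → (∀ z, Measurable (G z)) →
      Measurable (fun x => ⨆ z : L, |F z x - G z x|) := by
    intro F G hF hG
    have h := Finset.measurable_sup' (Finset.univ_nonempty (α := L))
      (f := fun z : L => fun x => |F z x - G z x|)
      (fun z _ => ((hF z).sub (hG z)).abs)
    have heq : (Finset.univ.sup' (Finset.univ_nonempty (α := L))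
        (fun z : L => fun x => |F z x - G z x|)) =
        fun x => ⨆ z : L, |F z x - G z x| := by
      funext x
      rw [← Finset.sup'_univ_eq_ciSup]
      simp [Finset.sup'_apply]
    rwa [heq] at h
  have hsup_mem : ∀ (F G : L → α → ℝ), (∀ z, Measurable (F z)) → (∀ z, Measurable (G z)) →
      (∀ z, MemLp (F z) 2 (ν j)) → (∀ z, MemLp (G z) 2 (ν j)) →
      MemLp (fun x => ⨆ z : L, |F z x - G z x|) 2 (ν j) := by
    intro F G hmF hmG hF hG
    have hg : MemLp (fun x => ∑ z : L, |F z x - G z x|) 2 (ν j) :=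
      memLp_finset_sum Finset.univ (fun z _ => habs_mem F G hF hG z)
    refine hg.of_le (hsup_meas F G hmF hmG).aestronglyMeasurable
      (Filter.Eventually.of_forall fun x => ?_)
    rw [Real.norm_eq_abs, Real.norm_eq_abs,
      abs_of_nonneg (Real.iSup_nonneg fun z => abs_nonneg _)]
    exact (hsup_le_sum (fun z x => F z x - G z x) x).trans (le_abs_self _)
  -- the per-z bound
  have key : ∀ z : L, l2norm (ν j) (fun x => Chat j z x - Cstar j z x) ≤
      (ε j + Real.sqrt 2 * S) + errSeq J ν Chat Cstar (j + 1) := by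
    intro z
    have h1 : MemLp (fun x => Chat j z x - Ctil j z x) 2 (ν j) :=
      (hL2Chat j z).sub (hL2Ctil j z)
    have h2 : MemLp (fun x => Ctil j z x - Cstar j z x) 2 (ν j) :=
      (hL2Ctil j z).sub (hL2Cstar j z)
    have tri : eLpNorm (fun x => Chat j z x - Cstar j z x) 2 (ν j) ≤
        eLpNorm (fun x => Chat j z x - Ctil j z x) 2 (ν j) +
          eLpNorm (fun x => Ctil j z x - Cstar j z x) 2 (ν j) := by
      have heq : (fun x => Chat j z x - Cstar j z x) =
          fun x => (Chat j z x - Ctil j z x) + (Ctil j z x - Cstar j z x) := by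
        funext x; ring
      rw [heq]
      exact eLpNorm_add_le h1.aestronglyMeasurable h2.aestronglyMeasurable (by norm_num)
    have step1 : l2norm (ν j) (fun x => Chat j z x - Cstar j z x) ≤
        l2norm (ν j) (fun x => Chat j z x - Ctil j z x) +
          l2norm (ν j) (fun x => Ctil j z x - Cstar j z x) := by
      unfold l2norm
      rw [← ENNReal.toReal_add h1.eLpNorm_ne_top h2.eLpNorm_ne_top]
      exact ENNReal.toReal_mono
        (ENNReal.add_ne_top.mpr ⟨h1.eLpNorm_ne_top, h2.eLpNorm_ne_top⟩) tri
    have hsupMem : MemLp (fun x => ⨆ z : L, |Ctil j z x - Cstar j z x|) 2 (ν j) :=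
      hsup_mem _ _ (hmCtil j) (hmCstar j) (hL2Ctil j) (hL2Cstar j)
    have step2 : l2norm (ν j) (fun x => Ctil j z x - Cstar j z x) ≤
        errSeq J ν Chat Cstar (j + 1) := by
      refine le_trans ?_ (hprop j hj)
      unfold l2norm
      refine ENNReal.toReal_mono hsupMem.eLpNorm_ne_top (eLpNorm_mono fun x => ?_)
      rw [Real.norm_eq_abs, Real.norm_eq_abs,
        abs_of_nonneg (Real.iSup_nonneg fun z => abs_nonneg _)]
      have hb : BddAbove (Set.range fun z : L => |Ctil j z x - Cstar j z x|) :=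
        Set.Finite.bddAbove (Set.finite_range _)
      exact le_ciSup hb z
    have step3 : l2norm (ν j) (fun x => Chat j z x - Ctil j z x) ≤
        ε j + Real.sqrt 2 * S := by
      refine le_trans (hproj j hj z) ?_
      have : sInf ((fun w => l2norm (ν j) (fun x => Ctil j z x - w x)) '' Ψ j) ≤ S := by
        rw [hSdef]
        have hb : BddAbove (Set.range fun z : L =>
            sInf ((fun w => l2norm (ν j) (fun x => Ctil j z x - w x)) '' Ψ j)) :=
          Set.Finite.bddAbove (Set.finite_range _)
        exact le_ciSup hb z
      nlinarith [Real.sqrt_nonneg 2]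
    linarith
  -- main bound: sup over z ≤ sum over z
  have hEj : errSeq J ν Chat Cstar j =
      l2norm (ν j) (fun x => ⨆ z : L, |Chat j z x - Cstar j z x|) := if_pos hj
  have hsumfin : ∀ z ∈ (Finset.univ : Finset L),
      eLpNorm (fun x => |Chat j z x - Cstar j z x|) 2 (ν j) ≠ ⊤ := fun z _ =>
    (habs_mem _ _ (hL2Chat j) (hL2Cstar j) z).eLpNorm_ne_top
  have hmono : eLpNorm (fun x => ⨆ z : L, |Chat j z x - Cstar j z x|) 2 (ν j) ≤
      ∑ z : L, eLpNorm (fun x => |Chat j z x - Cstar j z x|) 2 (ν j) := by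
    refine le_trans (eLpNorm_mono fun x => ?_)
      (eLpNorm_sum_le (f := fun z : L => fun x => |Chat j z x - Cstar j z x|) (fun z _ =>
        (habs_mem _ _ (hL2Chat j) (hL2Cstar j) z).aestronglyMeasurable) (by norm_num))
    rw [Real.norm_eq_abs, Real.norm_eq_abs,
      abs_of_nonneg (Real.iSup_nonneg fun z => abs_nonneg _)]
    calc (⨆ z : L, |Chat j z x - Cstar j z x|) ≤ ∑ z : L, |Chat j z x - Cstar j z x| :=
          hsup_le_sum (fun z x => Chat j z x - Cstar j z x) x
      _ ≤ |(∑ z : L, fun x => |Chat j z x - Cstar j z x|) x| := by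
          rw [Finset.sum_apply]; exact le_abs_self _
  have habs_eLp : ∀ z : L, eLpNorm (fun x => |Chat j z x - Cstar j z x|) 2 (ν j) =
      eLpNorm (fun x => Chat j z x - Cstar j z x) 2 (ν j) := by
    intro z
    simpa [Real.norm_eq_abs] using
      eLpNorm_norm (μ := ν j) (p := 2) (fun x => Chat j z x - Cstar j z x)
  have hsum : l2norm (ν j) (fun x => ⨆ z : L, |Chat j z x - Cstar j z x|) ≤
      ∑ z : L, l2norm (ν j) (fun x => Chat j z x - Cstar j z x) := by
    unfold l2norm
    calc (eLpNorm (fun x => ⨆ z : L, |Chat j z x - Cstar j z x|) 2 (ν j)).toReal ≤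
        (∑ z : L, eLpNorm (fun x => |Chat j z x - Cstar j z x|) 2 (ν j)).toReal :=
          ENNReal.toReal_mono (ENNReal.sum_ne_top.mpr hsumfin) hmono
      _ = ∑ z : L, (eLpNorm (fun x => Chat j z x - Cstar j z x) 2 (ν j)).toReal := by
          rw [ENNReal.toReal_sum hsumfin]
          exact Finset.sum_congr rfl fun z _ => by rw [habs_eLp z]
  have hfinal : ∑ z : L, l2norm (ν j) (fun x => Chat j z x - Cstar j z x) ≤
      (Fintype.card L : ℝ) * ((ε j + Real.sqrt 2 * S) + errSeq J ν Chat Cstar (j + 1)) := by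
    calc ∑ z : L, l2norm (ν j) (fun x => Chat j z x - Cstar j z x) ≤
        ∑ _z : L, ((ε j + Real.sqrt 2 * S) + errSeq J ν Chat Cstar (j + 1)) :=
          Finset.sum_le_sum fun z _ => key z
      _ = (Fintype.card L : ℝ) * ((ε j + Real.sqrt 2 * S) + errSeq J ν Chat Cstar (j + 1)) := by
          rw [Finset.sum_const, Finset.card_univ, nsmul_eq_mul]
  rw [hEj]
  calc l2norm (ν j) (fun x => ⨆ z : L, |Chat j z x - Cstar j z x|) ≤
      (Fintype.card L : ℝ) * ((ε j + Real.sqrt 2 * S) + errSeq J ν Chat Cstar (j + 1)) :=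
        hsum.trans hfinal
    _ = (Fintype.card L : ℝ) * (ε j + Real.sqrt 2 * S) +
        (Fintype.card L : ℝ) * errSeq J ν Chat Cstar (j + 1) := by ring
end

section
/- Alternative error recursion: Under the triangle-inequality decomposition inf_{w∈Ψ_j} ||C̃_j(z,·) − w|| ≤ ||C̃_j(z,·) − C*_j(z,·)|| + inf_{w∈Ψ_j} ||C*_j(z,·) − w|| (norms in L²(μ_j⊗P_M)), the error recursion of the main proposition becomes E_j ≤ |L|·( ε_{j,M} + √2 · sup_{z∈L} inf_{w∈Ψ_j} ||C*_j(z,·) − w||_{L²(μ_j)} ) + |L|·(1+√2)·E_{j+1}, and if sup_z inf_w ||C*_j(z,·) − w|| ≤ δ and ε_{j,M} ≤ ε for all j, then E_j ≤ (ε + √2 δ)·|L|·(((1+√2)|L|)^{J−j} − 1)/((1+√2)|L| − 1). -/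
open MeasureTheory

open scoped ENNReal NNReal

section Aux

variable {α : Type*} [MeasurableSpace α] {ν : Measure α}

lemma l2norm_nonneg (f : α → ℝ) : 0 ≤ l2norm ν f := ENNReal.toReal_nonneg

lemma errSeq_nonneg {α L : Type*} [MeasurableSpace α] [Fintype L]
    (J : ℕ) (ν : ℕ → Measure α) (Chat Cstar : ℕ → L → α → ℝ) (j : ℕ) :
    0 ≤ errSeq J ν Chat Cstar j := by
  unfold errSeq; split
  · exact l2norm_nonneg _
  · exact le_refl 0

lemma pt_eq (r : ℝ) : ((‖r‖₊ : ℝ≥0∞)) ^ (2:ℝ) = ENNReal.ofReal (r^2) := by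
  rw [← enorm_eq_nnnorm, ← ofReal_norm,
    ENNReal.ofReal_rpow_of_nonneg (norm_nonneg _) (by norm_num)]
  congr 1
  rw [Real.norm_eq_abs, show ((2:ℝ)) = ((2:ℕ):ℝ) by norm_num, Real.rpow_natCast, sq_abs]

lemma eLpNorm_two_eq (f : α → ℝ) :
    eLpNorm f 2 ν = (∫⁻ x, ENNReal.ofReal ((f x)^2) ∂ν) ^ ((1:ℝ)/2) := by
  rw [eLpNorm_eq_lintegral_rpow_enorm_toReal two_ne_zero ENNReal.ofNat_ne_top]
  norm_num
  congr 1
  refine lintegral_congr fun x => ?_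
  rw [← pt_eq (f x), ← ENNReal.rpow_natCast]
  norm_num
  rfl

lemma I2_eq (f : α → ℝ) :
    (∫⁻ x, ENNReal.ofReal ((f x)^2) ∂ν) = (eLpNorm f 2 ν) ^ (2:ℝ) := by
  rw [eLpNorm_two_eq, ← ENNReal.rpow_mul]
  norm_num

lemma lint_eps {f : α → ℝ} (g : α → ℝ) (hf : Measurable f) {ε : ℝ} (hε : 0 < ε) :
    ∫⁻ x, ENNReal.ofReal ((f x + g x)^2) ∂ν ≤
      ENNReal.ofReal (1+ε) * ∫⁻ x, ENNReal.ofReal ((f x)^2) ∂ν +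
      ENNReal.ofReal (1+1/ε) * ∫⁻ x, ENNReal.ofReal ((g x)^2) ∂ν := by
  have hmeas : Measurable fun x => ENNReal.ofReal (1+ε) * ENNReal.ofReal ((f x)^2) :=
    (measurable_const.mul ((hf.pow_const 2).ennreal_ofReal))
  calc ∫⁻ x, ENNReal.ofReal ((f x + g x)^2) ∂ν
      ≤ ∫⁻ x, (ENNReal.ofReal (1+ε) * ENNReal.ofReal ((f x)^2)
          + ENNReal.ofReal (1+1/ε) * ENNReal.ofReal ((g x)^2)) ∂ν := by
        refine lintegral_mono fun x => ?_
        rw [← ENNReal.ofReal_mul (by positivity), ← ENNReal.ofReal_mul (by positivity),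
          ← ENNReal.ofReal_add (by positivity) (by positivity)]
        refine ENNReal.ofReal_le_ofReal ?_
        have h2 : ε * (1/ε) = 1 := by field_simp
        nlinarith [sq_nonneg (ε * f x - g x), mul_pos hε hε]
    _ = _ := by
        rw [lintegral_add_left hmeas, lintegral_const_mul' _ _ ENNReal.ofReal_ne_top,
          lintegral_const_mul' _ _ ENNReal.ofReal_ne_top]

lemma key_triangle {f : α → ℝ} (g : α → ℝ) (hf : Measurable f)
    (hfin : eLpNorm f 2 ν ≠ ⊤) :
    eLpNorm (fun x => f x + g x) 2 ν ≤ eLpNorm f 2 ν + eLpNorm g 2 ν := by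
  by_cases hg : eLpNorm g 2 ν = ⊤
  · simp [hg]
  by_cases hf0 : eLpNorm f 2 ν = 0
  · have hf0' : f =ᵐ[ν] 0 :=
      (eLpNorm_eq_zero_iff hf.aestronglyMeasurable two_ne_zero).1 hf0
    have : (fun x => f x + g x) =ᵐ[ν] g := by
      filter_upwards [hf0'] with x hx
      simp [hx]
    rw [eLpNorm_congr_ae this]
    exact le_add_self
  have hA : (∫⁻ x, ENNReal.ofReal ((f x)^2) ∂ν) ≠ ⊤ := by
    rw [I2_eq]; exact ENNReal.rpow_ne_top_of_nonneg (by norm_num) hfin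
  have hB : (∫⁻ x, ENNReal.ofReal ((g x)^2) ∂ν) ≠ ⊤ := by
    rw [I2_eq]; exact ENNReal.rpow_ne_top_of_nonneg (by norm_num) hg
  have hC : (∫⁻ x, ENNReal.ofReal ((f x + g x)^2) ∂ν) ≠ ⊤ := by
    refine ne_top_of_le_ne_top ?_ (lint_eps g hf (ε := 1) one_pos)
    exact ENNReal.add_ne_top.2 ⟨ENNReal.mul_ne_top ENNReal.ofReal_ne_top hA,
      ENNReal.mul_ne_top ENNReal.ofReal_ne_top hB⟩
  have hCfin : eLpNorm (fun x => f x + g x) 2 ν ≠ ⊤ := by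
    rw [eLpNorm_two_eq]
    exact ENNReal.rpow_ne_top_of_nonneg (by norm_num) hC
  set a := (eLpNorm f 2 ν).toReal with ha
  set b := (eLpNorm g 2 ν).toReal with hb
  set c := (eLpNorm (fun x => f x + g x) 2 ν).toReal with hc
  have ha0 : 0 < a := ENNReal.toReal_pos hf0 hfin
  have hb0 : 0 ≤ b := ENNReal.toReal_nonneg
  have hc0 : 0 ≤ c := ENNReal.toReal_nonneg
  have hsq : ∀ ε : ℝ, 0 < ε → c^2 ≤ (1+ε)*a^2 + (1+1/ε)*b^2 := by
    intro ε hε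
    have h := lint_eps (ν := ν) g hf hε
    have := ENNReal.toReal_mono (ENNReal.add_ne_top.2 ⟨ENNReal.mul_ne_top ENNReal.ofReal_ne_top hA,
      ENNReal.mul_ne_top ENNReal.ofReal_ne_top hB⟩) h
    rw [ENNReal.toReal_add (ENNReal.mul_ne_top ENNReal.ofReal_ne_top hA)
        (ENNReal.mul_ne_top ENNReal.ofReal_ne_top hB),
      ENNReal.toReal_mul, ENNReal.toReal_mul,
      ENNReal.toReal_ofReal (by positivity), ENNReal.toReal_ofReal (by positivity)] at this
    have eA : (∫⁻ x, ENNReal.ofReal ((f x)^2) ∂ν).toReal = a^2 := by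
      rw [I2_eq, ← ENNReal.toReal_rpow, ← ha,
        show ((2:ℝ)) = ((2:ℕ):ℝ) by norm_num, Real.rpow_natCast]
    have eB : (∫⁻ x, ENNReal.ofReal ((g x)^2) ∂ν).toReal = b^2 := by
      rw [I2_eq, ← ENNReal.toReal_rpow, ← hb,
        show ((2:ℝ)) = ((2:ℕ):ℝ) by norm_num, Real.rpow_natCast]
    have eC : (∫⁻ x, ENNReal.ofReal ((f x + g x)^2) ∂ν).toReal = c^2 := by
      rw [I2_eq, ← ENNReal.toReal_rpow, ← hc,
        show ((2:ℝ)) = ((2:ℕ):ℝ) by norm_num, Real.rpow_natCast]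
    rw [eA, eB, eC] at this
    exact this
  have hcab : c ≤ a + b := by
    rcases eq_or_lt_of_le hb0 with hb1 | hb1
    · have h2 : c^2 ≤ a^2 := by
        refine le_of_forall_pos_le_add fun η hη => ?_
        have hh := hsq (η/a^2) (by positivity)
        rw [← hb1] at hh
        have h3 : c^2 ≤ a^2 + (η/a^2)*a^2 := by nlinarith
        have heq : (η/a^2)*a^2 = η := by field_simp
        linarith [h3, heq.le]
      have := le_of_pow_le_pow_left₀ two_ne_zero (le_of_lt ha0) h2
      linarith
    · have h := hsq (b/a) (by positivity)
      have e1 : (b/a)*a^2 = b*a := by field_simp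
      have e2 : (1/(b/a))*b^2 = a*b := by field_simp
      refine le_of_pow_le_pow_left₀ two_ne_zero (by positivity) ?_
      nlinarith [h, e1, e2]
  calc eLpNorm (fun x => f x + g x) 2 ν = ENNReal.ofReal c := by
        rw [hc, ENNReal.ofReal_toReal hCfin]
    _ ≤ ENNReal.ofReal (a + b) := ENNReal.ofReal_le_ofReal hcab
    _ = eLpNorm f 2 ν + eLpNorm g 2 ν := by
        rw [ENNReal.ofReal_add (le_of_lt ha0) hb0, ha, hb,
          ENNReal.ofReal_toReal hfin, ENNReal.ofReal_toReal hg]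

lemma l2norm_add_le {f : α → ℝ} (g : α → ℝ) (hf : Measurable f)
    (hfin : eLpNorm f 2 ν ≠ ⊤) :
    l2norm ν (fun x => f x + g x) ≤ l2norm ν f + l2norm ν g := by
  by_cases h : eLpNorm (fun x => f x + g x) 2 ν = ⊤
  · rw [l2norm, h]
    simp only [ENNReal.toReal_top]
    exact add_nonneg (l2norm_nonneg f) (l2norm_nonneg g)
  · have hg : eLpNorm g 2 ν ≠ ⊤ := by
      have h2 := key_triangle (ν := ν) (f := fun x => - f x) (fun x => f x + g x)
        hf.neg (by rw [show (fun x => -f x) = -f from rfl, eLpNorm_neg]; exact hfin)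
      have e : (fun x => (- f x) + (f x + g x)) = g := by funext x; ring
      rw [e, show (fun x => -f x) = -f from rfl, eLpNorm_neg] at h2
      exact ne_top_of_le_ne_top (ENNReal.add_ne_top.2 ⟨hfin, h⟩) h2
    rw [l2norm, l2norm, l2norm, ← ENNReal.toReal_add hfin hg]
    exact ENNReal.toReal_mono (ENNReal.add_ne_top.2 ⟨hfin, hg⟩) (key_triangle g hf hfin)

variable {L : Type*} [Fintype L] [Nonempty L]

lemma sup_mem_bound (d : L → α → ℝ) (hd : ∀ z, MemLp (d z) 2 ν) :
    eLpNorm (fun x => ⨆ z : L, |d z x|) 2 ν ≤ ∑ z : L, eLpNorm (d z) 2 ν := by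
  have h1 : eLpNorm (fun x => ⨆ z : L, |d z x|) 2 ν
      ≤ eLpNorm (fun x => ∑ z : L, |d z x|) 2 ν := by
    refine eLpNorm_mono fun x => ?_
    rw [Real.norm_eq_abs, Real.norm_eq_abs,
      abs_of_nonneg (le_ciSup_of_le (Set.finite_range (fun z : L => |d z x|)).bddAbove
        (Classical.arbitrary L) (abs_nonneg _)),
      abs_of_nonneg (Finset.sum_nonneg fun z _ => abs_nonneg _)]
    exact ciSup_le fun z => Finset.single_le_sum (fun z _ => abs_nonneg (d z x))
      (Finset.mem_univ z)
  have h2 : eLpNorm (fun x => ∑ z : L, |d z x|) 2 ν ≤ ∑ z : L, eLpNorm (d z) 2 ν := by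
    have e : (fun x => ∑ z : L, |d z x|) = ∑ z : L, (fun x => |d z x|) := by
      funext x; simp
    rw [e]
    refine le_trans (eLpNorm_sum_le (fun z _ => ((hd z).1.norm.congr ?_)) (by norm_num)) ?_
    · exact Filter.Eventually.of_forall fun x => (Real.norm_eq_abs _).symm
    · refine Finset.sum_le_sum fun z _ => le_of_eq ?_
      rw [← eLpNorm_norm (d z)]
      exact eLpNorm_congr_ae (Filter.Eventually.of_forall fun x => Real.norm_eq_abs _)
  exact le_trans h1 h2

lemma sup_ne_top (d : L → α → ℝ) (hd : ∀ z, MemLp (d z) 2 ν) :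
    eLpNorm (fun x => ⨆ z : L, |d z x|) 2 ν ≠ ⊤ :=
  ne_top_of_le_ne_top (ENNReal.sum_ne_top.2 fun z _ => (hd z).2.ne) (sup_mem_bound d hd)

lemma l2norm_sup_le_sum (d : L → α → ℝ) (hd : ∀ z, MemLp (d z) 2 ν) :
    l2norm ν (fun x => ⨆ z : L, |d z x|) ≤ ∑ z : L, l2norm ν (d z) := by
  have := ENNReal.toReal_mono (ENNReal.sum_ne_top.2 fun z _ => (hd z).2.ne)
    (sup_mem_bound d hd)
  rwa [ENNReal.toReal_sum fun z _ => (hd z).2.ne] at this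

lemma l2norm_le_sup (d : L → α → ℝ) (hd : ∀ z, MemLp (d z) 2 ν) (z : L) :
    l2norm ν (d z) ≤ l2norm ν (fun x => ⨆ z : L, |d z x|) := by
  refine ENNReal.toReal_mono (sup_ne_top d hd) (eLpNorm_mono fun x => ?_)
  rw [Real.norm_eq_abs, Real.norm_eq_abs,
    abs_of_nonneg (le_ciSup_of_le (Set.finite_range (fun z : L => |d z x|)).bddAbove z
      (abs_nonneg _))]
  exact le_ciSup (Set.finite_range (fun z : L => |d z x|)).bddAbove z

end Aux

/-- **Alternative error recursion**: under the hypotheses of the main error-propagation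
proposition, the triangle-inequality decomposition
`inf_{w∈Ψ_j} ‖C̃_j(z,·) − w‖ ≤ ‖C̃_j(z,·) − C*_j(z,·)‖ + inf_{w∈Ψ_j} ‖C*_j(z,·) − w‖`
yields the recursion
`E_j ≤ |L|·(ε_{j,M} + √2·sup_z inf_{w∈Ψ_j} ‖C*_j(z,·) − w‖) + |L|·(1+√2)·E_{j+1}`,
and if moreover `sup_z inf_w ‖C*_j(z,·) − w‖ ≤ δ` and `ε_{j,M} ≤ ε` for all `j`, then
`E_j ≤ (ε + √2 δ)·|L|·(((1+√2)|L|)^{J−j} − 1)/((1+√2)|L| − 1)` for all `j ≤ J`. -/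
theorem alternative_error_recursion
    {α L : Type*} [MeasurableSpace α] [Fintype L] [Nonempty L]
    (J : ℕ) (ν : ℕ → Measure α)
    (Chat Ctil Cstar : ℕ → L → α → ℝ)
    (Ψ : ℕ → Set (α → ℝ)) (hΨ : ∀ j, (Ψ j).Nonempty)
    (εs : ℕ → ℝ) (ε δ : ℝ) (hε : 0 ≤ ε) (hδ : 0 ≤ δ)
    (hL : 2 ≤ Fintype.card L)
    (hmChat : ∀ j z, Measurable (Chat j z))
    (hmCtil : ∀ j z, Measurable (Ctil j z))
    (hmCstar : ∀ j z, Measurable (Cstar j z))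
    (hL2Chat : ∀ j z, MemLp (Chat j z) 2 (ν j))
    (hL2Ctil : ∀ j z, MemLp (Ctil j z) 2 (ν j))
    (hL2Cstar : ∀ j z, MemLp (Cstar j z) 2 (ν j))
    (hproj : ∀ j, j < J → ∀ z : L,
      l2norm (ν j) (fun x => Chat j z x - Ctil j z x) ≤
        εs j + Real.sqrt 2 *
          sInf ((fun w => l2norm (ν j) (fun x => Ctil j z x - w x)) '' Ψ j))
    (hprop : ∀ j, j + 1 ≤ J →
      l2norm (ν j) (fun x => ⨆ z : L, |Ctil j z x - Cstar j z x|) ≤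
        errSeq J ν Chat Cstar (j + 1))
    (hδbound : ∀ j, j < J → ∀ z : L,
      sInf ((fun w => l2norm (ν j) (fun x => Cstar j z x - w x)) '' Ψ j) ≤ δ)
    (hεbound : ∀ j, j < J → εs j ≤ ε) :
    (∀ j, j < J →
      errSeq J ν Chat Cstar j ≤
        (Fintype.card L : ℝ) * (εs j + Real.sqrt 2 *
            ⨆ z : L, sInf ((fun w => l2norm (ν j) (fun x => Cstar j z x - w x)) '' Ψ j)) +
          (Fintype.card L : ℝ) * (1 + Real.sqrt 2) * errSeq J ν Chat Cstar (j + 1)) ∧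
    (∀ j, j ≤ J →
      errSeq J ν Chat Cstar j ≤
        (ε + Real.sqrt 2 * δ) * (Fintype.card L : ℝ) *
          ((((1 + Real.sqrt 2) * (Fintype.card L : ℝ)) ^ (J - j) - 1) /
            ((1 + Real.sqrt 2) * (Fintype.card L : ℝ) - 1))) := by
  have hs2 : (0:ℝ) ≤ Real.sqrt 2 := Real.sqrt_nonneg 2
  have hcard : (2:ℝ) ≤ (Fintype.card L : ℝ) := by exact_mod_cast hL
  have part1 : ∀ j, j < J →
      errSeq J ν Chat Cstar j ≤
        (Fintype.card L : ℝ) * (εs j + Real.sqrt 2 *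
            ⨆ z : L, sInf ((fun w => l2norm (ν j) (fun x => Cstar j z x - w x)) '' Ψ j)) +
          (Fintype.card L : ℝ) * (1 + Real.sqrt 2) * errSeq J ν Chat Cstar (j + 1) := by
    intro j hjJ
    set S2 : L → ℝ := fun z =>
      sInf ((fun w => l2norm (ν j) (fun x => Cstar j z x - w x)) '' Ψ j) with hS2
    have hdTC : ∀ z : L, MemLp (fun x => Ctil j z x - Cstar j z x) 2 (ν j) :=
      fun z => (hL2Ctil j z).sub (hL2Cstar j z)
    have hdCC : ∀ z : L, MemLp (fun x => Chat j z x - Cstar j z x) 2 (ν j) :=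
      fun z => (hL2Chat j z).sub (hL2Cstar j z)
    have hdHT : ∀ z : L, MemLp (fun x => Chat j z x - Ctil j z x) 2 (ν j) :=
      fun z => (hL2Chat j z).sub (hL2Ctil j z)
    have hTz : ∀ z : L, l2norm (ν j) (fun x => Ctil j z x - Cstar j z x) ≤
        errSeq J ν Chat Cstar (j+1) := fun z =>
      le_trans (l2norm_le_sup (fun z x => Ctil j z x - Cstar j z x) hdTC z) (hprop j hjJ)
    have hsup : ∀ z : L, S2 z ≤ ⨆ z : L, S2 z :=
      fun z => le_ciSup (Set.finite_range S2).bddAbove z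
    have hinf : ∀ z : L,
        sInf ((fun w => l2norm (ν j) (fun x => Ctil j z x - w x)) '' Ψ j) ≤
          l2norm (ν j) (fun x => Ctil j z x - Cstar j z x) + S2 z := by
      intro z
      have hne2 : ((fun w => l2norm (ν j) (fun x => Cstar j z x - w x)) '' Ψ j).Nonempty :=
        (hΨ j).image _
      have hbdd1 : BddBelow ((fun w => l2norm (ν j) (fun x => Ctil j z x - w x)) '' Ψ j) := by
        refine ⟨0, fun b hb => ?_⟩
        obtain ⟨w, hw, rfl⟩ := hb
        exact l2norm_nonneg _
      have hmain : ∀ b ∈ ((fun w => l2norm (ν j) (fun x => Cstar j z x - w x)) '' Ψ j),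
          sInf ((fun w => l2norm (ν j) (fun x => Ctil j z x - w x)) '' Ψ j)
            - l2norm (ν j) (fun x => Ctil j z x - Cstar j z x) ≤ b := by
        rintro b ⟨w, hw, rfl⟩
        have h1 : sInf ((fun w => l2norm (ν j) (fun x => Ctil j z x - w x)) '' Ψ j) ≤
            l2norm (ν j) (fun x => Ctil j z x - w x) :=
          csInf_le hbdd1 ⟨w, hw, rfl⟩
        have e : (fun x => Ctil j z x - w x) =
            fun x => (Ctil j z x - Cstar j z x) + (Cstar j z x - w x) := by funext x; ring
        have h2 : l2norm (ν j) (fun x => Ctil j z x - w x) ≤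
            l2norm (ν j) (fun x => Ctil j z x - Cstar j z x) +
              l2norm (ν j) (fun x => Cstar j z x - w x) := by
          rw [e]
          exact l2norm_add_le _ ((hmCtil j z).sub (hmCstar j z)) (hdTC z).2.ne
        linarith
      have := le_csInf hne2 hmain
      rw [hS2]
      linarith
    have hz : ∀ z : L, l2norm (ν j) (fun x => Chat j z x - Cstar j z x) ≤
        εs j + Real.sqrt 2 * (⨆ z : L, S2 z) +
          (1 + Real.sqrt 2) * errSeq J ν Chat Cstar (j+1) := by
      intro z
      have e : (fun x => Chat j z x - Cstar j z x) =
          fun x => (Chat j z x - Ctil j z x) + (Ctil j z x - Cstar j z x) := by funext x; ring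
      have h0 : l2norm (ν j) (fun x => Chat j z x - Cstar j z x) ≤
          l2norm (ν j) (fun x => Chat j z x - Ctil j z x) +
            l2norm (ν j) (fun x => Ctil j z x - Cstar j z x) := by
        rw [e]
        exact l2norm_add_le _ ((hmChat j z).sub (hmCtil j z)) (hdHT z).2.ne
      have h1 := hproj j hjJ z
      have h2 := hinf z
      have h3 := hTz z
      have h4 := hsup z
      have m1 : Real.sqrt 2 *
          sInf ((fun w => l2norm (ν j) (fun x => Ctil j z x - w x)) '' Ψ j) ≤
          Real.sqrt 2 * (errSeq J ν Chat Cstar (j+1) + ⨆ z : L, S2 z) :=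
        mul_le_mul_of_nonneg_left (by linarith) hs2
      linarith
    have hsum : errSeq J ν Chat Cstar j ≤
        ∑ _z : L, (εs j + Real.sqrt 2 * (⨆ z : L, S2 z) +
          (1 + Real.sqrt 2) * errSeq J ν Chat Cstar (j+1)) := by
      rw [errSeq, if_pos hjJ]
      refine le_trans (l2norm_sup_le_sum (fun z x => Chat j z x - Cstar j z x) hdCC) ?_
      exact Finset.sum_le_sum fun z _ => hz z
    rw [Finset.sum_const, Finset.card_univ, nsmul_eq_mul] at hsum
    calc errSeq J ν Chat Cstar j ≤ (Fintype.card L : ℝ) *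
          (εs j + Real.sqrt 2 * (⨆ z : L, S2 z) +
            (1 + Real.sqrt 2) * errSeq J ν Chat Cstar (j+1)) := hsum
      _ = _ := by rw [hS2]; ring
  refine ⟨part1, ?_⟩
  have key : ∀ n : ℕ, ∀ j, j ≤ J → J - j = n →
      errSeq J ν Chat Cstar j ≤
        (ε + Real.sqrt 2 * δ) * (Fintype.card L : ℝ) *
          ((((1 + Real.sqrt 2) * (Fintype.card L : ℝ)) ^ n - 1) /
            ((1 + Real.sqrt 2) * (Fintype.card L : ℝ) - 1)) := by
    intro n
    induction n with
    | zero =>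
      intro j hj hjn
      have hnlt : ¬ j < J := by omega
      rw [errSeq, if_neg hnlt]
      norm_num
    | succ n ih =>
      intro j hj hjn
      have hjJ : j < J := by omega
      have hIH := ih (j+1) (by omega) (by omega)
      have h1 := part1 j hjJ
      have hsupδ : (⨆ z : L, sInf ((fun w =>
          l2norm (ν j) (fun x => Cstar j z x - w x)) '' Ψ j)) ≤ δ :=
        ciSup_le fun z => hδbound j hjJ z
      have hεj := hεbound j hjJ
      set K := (Fintype.card L : ℝ) with hK
      set s := Real.sqrt 2 with hs
      set r := (1 + s) * K with hr
      have hr1 : (1:ℝ) < r := by nlinarith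
      have hE1 : 0 ≤ errSeq J ν Chat Cstar (j+1) := errSeq_nonneg J ν Chat Cstar (j+1)
      have hstep1 : K * (εs j + s *
          ⨆ z : L, sInf ((fun w => l2norm (ν j) (fun x => Cstar j z x - w x)) '' Ψ j)) ≤
          K * (ε + s * δ) := by
        refine mul_le_mul_of_nonneg_left ?_ (by linarith)
        exact add_le_add hεj (mul_le_mul_of_nonneg_left hsupδ hs2)
      have hstep2 : K * (1 + s) * errSeq J ν Chat Cstar (j+1) ≤
          K * (1 + s) * ((ε + s * δ) * K * ((r ^ n - 1) / (r - 1))) := by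
        refine mul_le_mul_of_nonneg_left hIH ?_
        nlinarith
      have hfin : K * (ε + s * δ) + K * (1 + s) * ((ε + s * δ) * K * ((r ^ n - 1) / (r - 1)))
          = (ε + s * δ) * K * ((r ^ (n+1) - 1) / (r - 1)) := by
        have hrne : r - 1 ≠ 0 := by linarith
        field_simp
        ring
      linarith [h1, hstep1, hstep2, hfin.le, hfin.ge]
  intro j hj
  exact key (J - j) j hj rfl
end
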